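/- Let R be a ring and M a right R-module. If M is finitely generated and M is R-projective (i.e., every homomorphism from M to R/I, for any right ideal I, factors through the canonical projection R → R/I), then M is projective. -/

import Mathlib

universe u v

/-- `M` is `R`-projective: every homomorphism from `M` to `R ⧸ I`, for any ideal `I`,
factors through the canonical projection `R → R ⧸ I`. -/
def IsRProjective (R : Type u) [Ring R] (M : Type v) [AddCommGroup M] [Module R M] : Prop :=
  ∀ (I : Submodule R R) (f : M →ₗ[R] R ⧸ I), ∃ g : M →ₗ[R] R, I.mkQ.comp g = f

section Aux

variable (R : Type u) [Ring R] (M : Type u) [AddCommGroup M] [Module R M]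

/-- Relative projectivity of `M` with respect to `N`. -/
def RelProj (N : Type u) [AddCommGroup N] [Module R N] : Prop :=
  ∀ (X : Type u) [AddCommGroup X] [Module R X] (g : N →ₗ[R] X), Function.Surjective g →
    ∀ f : M →ₗ[R] X, ∃ h : M →ₗ[R] N, g.comp h = f

variable {R M}

theorem relProj_of_isRProjective (hRproj : IsRProjective R M) : RelProj R M R := by
  intro X _ _ g hg f
  let e := g.quotKerEquivOfSurjective hg
  obtain ⟨h, hh⟩ := hRproj (LinearMap.ker g) ((e.symm : X →ₗ[R] _).comp f)
  refine ⟨h, ?_⟩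
  ext m
  have h1 : (LinearMap.ker g).mkQ (h m) = e.symm (f m) := LinearMap.congr_fun hh m
  have h2 : e ((LinearMap.ker g).mkQ (h m)) = g (h m) := by
    simp [e, LinearMap.quotKerEquivOfSurjective, LinearMap.quotKerEquivRange,
      Submodule.mkQ, LinearMap.quotientInfEquivSupQuotient]
  simp only [LinearMap.coe_comp, Function.comp_apply]
  rw [← h2, h1, LinearEquiv.apply_symm_apply]

theorem relProj_of_surjective {A B : Type u} [AddCommGroup A] [Module R A]
    [AddCommGroup B] [Module R B] (hA : RelProj R M A) (π : A →ₗ[R] B)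
    (hπ : Function.Surjective π) : RelProj R M B := by
  intro X _ _ g hg f
  obtain ⟨h, hh⟩ := hA X (g.comp π) (hg.comp hπ) f
  exact ⟨π.comp h, by rw [← LinearMap.comp_assoc, hh]⟩

theorem relProj_prod {A B : Type u} [AddCommGroup A] [Module R A]
    [AddCommGroup B] [Module R B] (hA : RelProj R M A) (hB : RelProj R M B) :
    RelProj R M (A × B) := by
  intro X _ _ g hg f
  set T : Submodule R X := LinearMap.range (g.comp (LinearMap.inr R A B)) with hT
  -- lift modulo T using A-projectivity
  have hgA : Function.Surjective (T.mkQ.comp (g.comp (LinearMap.inl R A B))) := by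
    intro y
    obtain ⟨x, rfl⟩ := T.mkQ_surjective y
    obtain ⟨⟨a, b⟩, rfl⟩ := hg x
    refine ⟨a, ?_⟩
    have : g (a, b) - g (a, 0) ∈ T := ⟨b, by rw [← map_sub]; simp⟩
    simp only [LinearMap.coe_comp, Function.comp_apply, LinearMap.coe_inl]
    rw [eq_comm, ← sub_eq_zero, ← map_sub, Submodule.mkQ_apply,
      Submodule.Quotient.mk_eq_zero]
    exact this
  obtain ⟨h₁, hh₁⟩ := hA (X ⧸ T) (T.mkQ.comp (g.comp (LinearMap.inl R A B))) hgA
    (T.mkQ.comp f)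
  -- the correction term lands in T
  have hmem : ∀ m : M, f m - g (h₁ m, 0) ∈ T := by
    intro m
    have : T.mkQ (g (h₁ m, 0)) = T.mkQ (f m) := LinearMap.congr_fun hh₁ m
    rw [← Submodule.Quotient.mk_eq_zero, ← Submodule.mkQ_apply, map_sub, this, sub_self]
  let f₂ : M →ₗ[R] T := (f - g.comp ((LinearMap.inl R A B).comp h₁)).codRestrict T
    (by intro m; simpa using hmem m)
  have hgB : Function.Surjective ((g.comp (LinearMap.inr R A B)).rangeRestrict) :=
    LinearMap.surjective_rangeRestrict _
  obtain ⟨h₂, hh₂⟩ := hB T ((g.comp (LinearMap.inr R A B)).rangeRestrict) hgB f₂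
  refine ⟨LinearMap.prod h₁ h₂, ?_⟩
  ext m
  have e2 : g (0, h₂ m) = (f₂ m : X) := by
    have := LinearMap.congr_fun (congrArg (fun (p : M →ₗ[R] T) => (T.subtype.comp p : M →ₗ[R] X)) hh₂) m
    simpa using this
  have e3 : (f₂ m : X) = f m - g (h₁ m, 0) := rfl
  have : ((h₁ m, h₂ m) : A × B) = (h₁ m, 0) + (0, h₂ m) := by simp
  simp only [LinearMap.coe_comp, Function.comp_apply, LinearMap.prod_apply, Function.prod, this,
    map_add, e2, e3]
  abel

theorem relProj_pi (hRproj : IsRProjective R M) (n : ℕ) :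
    RelProj R M (Fin n → R) := by
  induction n with
  | zero =>
    intro X _ _ g hg f
    have : Subsingleton X := by
      constructor
      intro x y
      obtain ⟨a, rfl⟩ := hg x
      obtain ⟨b, rfl⟩ := hg y
      rw [Subsingleton.elim a b]
    exact ⟨0, by ext m; exact Subsingleton.elim _ _⟩
  | succ n ih =>
    have hprod : RelProj R M (R × (Fin n → R)) :=
      relProj_prod (relProj_of_isRProjective hRproj) ih
    -- surjection R × (Fin n → R) → (Fin (n+1) → R)
    let π : (R × (Fin n → R)) →ₗ[R] (Fin (n + 1) → R) :=
      LinearMap.pi fun i => Fin.cases (LinearMap.fst R R (Fin n → R))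
        (fun j => (LinearMap.proj j).comp (LinearMap.snd R R (Fin n → R))) i
    have hπ : Function.Surjective π := by
      intro v
      refine ⟨(v 0, fun j => v j.succ), ?_⟩
      funext i
      refine Fin.cases ?_ (fun j => ?_) i <;> simp [π]
    exact relProj_of_surjective hprod π hπ

end Aux

/-- A finitely generated `R`-projective module is projective. -/
theorem finitelyGenerated_isRProjective_projective
    (R : Type u) [Ring R] (M : Type u) [AddCommGroup M] [Module R M]
    (hfg : Module.Finite R M) (hRproj : IsRProjective R M) :
    Module.Projective R M := by
  obtain ⟨n, p, hp⟩ := Module.Finite.exists_fin' R M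
  obtain ⟨h, hh⟩ := relProj_pi hRproj n M p hp LinearMap.id
  exact Module.Projective.of_split h p hh
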